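/- Let d₁, d₂, p₁, p₂ be real numbers with d₁ > 0, d₂ > 0, p₂ > 0, p₁ > 0 and p₁ + p₂ ≤ d₁, and define r₁(λ) = (2d₁ − p₁ − 2p₂)/(4d₁) + (p₂/(4d₁))λ² and r₂(λ) = −1/2 − (p₂/(2d₂))λ. Let t₁ > 0 and t₂ < 0 be real numbers. Then there exist pairs (c, λ) and (c′, λ′) with c, c′, λ, λ′ > 0, c ≠ c′, r₁(λ) = c·t₁, r₂(λ) = c·t₂, r₁(λ′) = c′·t₁ and r₂(λ′) = c′·t₂ if and only if −(2d₁ − p₁ − 2p₂)/(2d₁) < t₁/t₂ < d₂²/(d₁p₂) − (d₂/d₁)·√(d₂²/p₂² + (2d₁ − p₁ − 2p₂)/p₂). -/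

import Mathlib

set_option maxHeartbeats 1000000 in
theorem stmt_2 (d₁ d₂ p₁ p₂ : ℝ) (hd₁ : 0 < d₁) (hd₂ : 0 < d₂) (hp₂ : 0 < p₂)
    (hp₁ : 0 < p₁) (hsum : p₁ + p₂ ≤ d₁)
    (r₁ r₂ : ℝ → ℝ)
    (hr₁ : ∀ l : ℝ, r₁ l = (2*d₁ - p₁ - 2*p₂)/(4*d₁) + (p₂/(4*d₁))*l^2)
    (hr₂ : ∀ l : ℝ, r₂ l = -1/2 - (p₂/(2*d₂))*l)
    (t₁ t₂ : ℝ) (ht₁ : 0 < t₁) (ht₂ : t₂ < 0) :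
    (∃ c l c' l' : ℝ, 0 < c ∧ 0 < c' ∧ 0 < l ∧ 0 < l' ∧ c ≠ c' ∧
        r₁ l = c * t₁ ∧ r₂ l = c * t₂ ∧ r₁ l' = c' * t₁ ∧ r₂ l' = c' * t₂) ↔
      (-(2*d₁ - p₁ - 2*p₂)/(2*d₁) < t₁/t₂ ∧
        t₁/t₂ < d₂^2/(d₁*p₂) -
          (d₂/d₁) * Real.sqrt (d₂^2/p₂^2 + (2*d₁ - p₁ - 2*p₂)/p₂)) := by
  have ht₂' : t₂ ≠ 0 := ne_of_lt ht₂
  have hd₁' : d₁ ≠ 0 := ne_of_gt hd₁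
  have hd₂' : d₂ ≠ 0 := ne_of_gt hd₂
  have hp₂' : p₂ ≠ 0 := ne_of_gt hp₂
  obtain ⟨Q, hQdef⟩ : ∃ q : ℝ, q = 2*d₁ - p₁ - 2*p₂ := ⟨_, rfl⟩
  rw [← hQdef] at hr₁ ⊢
  have hQ : 0 < Q := by rw [hQdef]; linarith only [hsum, hp₁]
  obtain ⟨s, hsdef⟩ : ∃ x : ℝ, x = t₁/t₂ := ⟨_, rfl⟩
  rw [← hsdef]
  have hs : s < 0 := by rw [hsdef]; exact div_neg_of_pos_of_neg ht₁ ht₂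
  have hts : t₁ = s * t₂ := by rw [hsdef, div_mul_cancel₀ _ ht₂']
  have hargpos : 0 < d₂^2/p₂^2 + Q/p₂ := by positivity
  obtain ⟨S, hSdef⟩ : ∃ x : ℝ, x = Real.sqrt (d₂^2/p₂^2 + Q/p₂) := ⟨_, rfl⟩
  rw [← hSdef]
  have hSsq : S^2 = d₂^2/p₂^2 + Q/p₂ := by rw [hSdef]; exact Real.sq_sqrt hargpos.le
  have hSpos : 0 < S := by rw [hSdef]; exact Real.sqrt_pos.mpr hargpos
  have hW : 0 < (d₂/d₁)*S := by positivity
  have hM : 0 < d₂^2/(d₁*p₂) := by positivity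
  have hMs : 0 < d₂^2/(d₁*p₂) - s := by linarith only [hM, hs]
  have hid : (d₂^2/(d₁*p₂) - s)^2 - ((d₂/d₁)*S)^2
      = (d₁^2*p₂*s^2 - 2*d₁*d₂^2*s - d₂^2*Q)/(d₁^2*p₂) := by
    rw [mul_pow, hSsq]; field_simp; ring
  constructor
  · rintro ⟨c, l, c', l', hc, hc', hl, hl', hne, h1, h2, h3, h4⟩
    have hll' : l ≠ l' := by
      intro h; apply hne
      have : c * t₂ = c' * t₂ := by rw [← h2, ← h4, h]
      exact mul_right_cancel₀ ht₂' this
    have e1 : Q/(4*d₁) + (p₂/(4*d₁))*l^2 = s*(-1/2 - (p₂/(2*d₂))*l) := by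
      rw [← hr₁ l, ← hr₂ l, h1, h2, hts]; ring
    have e2 : Q/(4*d₁) + (p₂/(4*d₁))*l'^2 = s*(-1/2 - (p₂/(2*d₂))*l') := by
      rw [← hr₁ l', ← hr₂ l', h3, h4, hts]; ring
    have E1 : p₂*d₂*l^2 + 2*d₁*p₂*s*l + Q*d₂ + 2*d₁*d₂*s = 0 := by
      field_simp at e1; linear_combination e1/2
    have E2 : p₂*d₂*l'^2 + 2*d₁*p₂*s*l' + Q*d₂ + 2*d₁*d₂*s = 0 := by
      field_simp at e2; linear_combination e2/2
    have hsum' : p₂*d₂*(l + l') + 2*d₁*p₂*s = 0 := by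
      have hdiff : (l - l') * (p₂*d₂*(l + l') + 2*d₁*p₂*s) = 0 := by
        linear_combination E1 - E2
      rcases mul_eq_zero.mp hdiff with h | h
      · exact absurd (sub_eq_zero.mp h) hll'
      · exact h
    have hprod : p₂*d₂*(l*l') = Q*d₂ + 2*d₁*d₂*s := by
      linear_combination l*hsum' - E1
    have hQs : 0 < Q + 2*d₁*s := by
      have h1' : 0 < p₂*d₂*(l*l') := by positivity
      by_contra h
      push_neg at h
      linarith only [hprod, h1', mul_nonneg hd₂.le (neg_nonneg.mpr h)]
    refine ⟨?_, ?_⟩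
    · rw [div_lt_iff₀ (by linarith only [hd₁] : (0:ℝ) < 2*d₁)]
      linarith only [hQs]
    · have hkey : 4*p₂*(d₁^2*p₂*s^2 - 2*d₁*d₂^2*s - d₂^2*Q)
          = (p₂*d₂)^2*(l - l')^2 := by
        linear_combination (2*d₁*p₂*s - p₂*d₂*(l+l')) * hsum' + 4*p₂*d₂ * hprod
      have h0 : 0 < (l - l')^2 := pow_two_pos_of_ne_zero (sub_ne_zero.mpr hll')
      have hstar : 0 < d₁^2*p₂*s^2 - 2*d₁*d₂^2*s - d₂^2*Q := by
        by_contra h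
        push_neg at h
        have hpos2 : 0 < (p₂*d₂)^2*(l-l')^2 :=
          mul_pos (pow_pos (mul_pos hp₂ hd₂) 2) h0
        linarith only [hkey, hpos2, mul_nonneg hp₂.le (neg_nonneg.mpr h)]
      have h8 : 0 < (d₂^2/(d₁*p₂) - s)^2 - ((d₂/d₁)*S)^2 := by
        rw [hid]; exact div_pos hstar (by positivity)
      by_contra hcon
      push_neg at hcon
      have h10 : 0 ≤ s - (d₂^2/(d₁*p₂) - (d₂/d₁)*S) := by linarith only [hcon]
      have h11 : 0 < (d₂^2/(d₁*p₂) - s) + (d₂/d₁)*S := by linarith only [hMs, hW]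
      have h12 : 0 ≤ (s - (d₂^2/(d₁*p₂) - (d₂/d₁)*S)) *
          ((d₂^2/(d₁*p₂) - s) + (d₂/d₁)*S) := mul_nonneg h10 h11.le
      linarith only [h8, h12]
  · rintro ⟨hL, hR⟩
    rw [div_lt_iff₀ (by linarith only [hd₁] : (0:ℝ) < 2*d₁)] at hL
    have hQs : 0 < Q + 2*d₁*s := by linarith only [hL]
    have h8 : ((d₂/d₁)*S)^2 < (d₂^2/(d₁*p₂) - s)^2 := by
      apply pow_lt_pow_left₀ (by linarith only [hR]) hW.le
      norm_num
    have hstar : 0 < d₁^2*p₂*s^2 - 2*d₁*d₂^2*s - d₂^2*Q := by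
      have h9 : 0 < (d₁^2*p₂*s^2 - 2*d₁*d₂^2*s - d₂^2*Q)/(d₁^2*p₂) := by
        rw [← hid]; linarith only [h8]
      by_contra h
      push_neg at h
      have : (d₁^2*p₂*s^2 - 2*d₁*d₂^2*s - d₂^2*Q)/(d₁^2*p₂) ≤ 0 :=
        div_nonpos_of_nonpos_of_nonneg h (by positivity)
      linarith only [h9, this]
    have hD : 0 < (2*d₁/d₂*s)^2 - 4*((Q + 2*d₁*s)/p₂) := by
      have hide : (2*d₁/d₂*s)^2 - 4*((Q + 2*d₁*s)/p₂)
          = (d₁^2*p₂*s^2 - 2*d₁*d₂^2*s - d₂^2*Q) * (4/(d₂^2*p₂)) := by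
        field_simp; ring
      rw [hide]; positivity
    obtain ⟨δ, hδdef⟩ : ∃ x : ℝ,
        x = Real.sqrt ((2*d₁/d₂*s)^2 - 4*((Q + 2*d₁*s)/p₂)) := ⟨_, rfl⟩
    have hδsq : δ^2 = (2*d₁/d₂*s)^2 - 4*((Q + 2*d₁*s)/p₂) := by
      rw [hδdef]; exact Real.sq_sqrt hD.le
    have hδpos : 0 < δ := by rw [hδdef]; exact Real.sqrt_pos.mpr hD
    have hδsq' : p₂*d₂^2*δ^2 = 4*d₁^2*p₂*s^2 - 4*d₂^2*(Q + 2*d₁*s) := by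
      rw [hδsq]; field_simp; ring
    obtain ⟨l, hldef⟩ : ∃ x : ℝ, x = (-(2*d₁/d₂)*s + δ)/2 := ⟨_, rfl⟩
    obtain ⟨l', hl'def⟩ : ∃ x : ℝ, x = (-(2*d₁/d₂)*s - δ)/2 := ⟨_, rfl⟩
    have hSig : 0 < -(2*d₁/d₂)*s := by
      have h1 : 0 < 2*d₁/d₂ := by positivity
      linarith only [mul_pos h1 (neg_pos.mpr hs)]
    have hl : 0 < l := by rw [hldef]; linarith only [hSig, hδpos]
    have hδlt : δ < -(2*d₁/d₂)*s := by
      have hP : 0 < (Q + 2*d₁*s)/p₂ := by positivity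
      by_contra hcon
      push_neg at hcon
      have h12 : 0 ≤ (δ - -(2*d₁/d₂)*s) * (δ + -(2*d₁/d₂)*s) :=
        mul_nonneg (by linarith only [hcon]) (by linarith only [hδpos, hSig])
      linarith only [h12, hδsq, hP]
    have hl' : 0 < l' := by rw [hl'def]; linarith only [hδlt]
    have hl2 : 2*d₂*l = -(2*d₁*s) + d₂*δ := by
      rw [hldef]; field_simp
    have hl2' : 2*d₂*l' = -(2*d₁*s) - d₂*δ := by
      rw [hl'def]; field_simp
    have hroot : 4*d₂*(p₂*d₂*l^2 + 2*d₁*p₂*s*l + Q*d₂ + 2*d₁*d₂*s) = 0 := by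
      linear_combination (p₂*(2*d₂*l + 2*d₁*s + d₂*δ)) * hl2 + hδsq'
    have hroot' : 4*d₂*(p₂*d₂*l'^2 + 2*d₁*p₂*s*l' + Q*d₂ + 2*d₁*d₂*s) = 0 := by
      linear_combination (p₂*(2*d₂*l' + 2*d₁*s - d₂*δ)) * hl2' + hδsq'
    have h4d₂ : (4:ℝ)*d₂ ≠ 0 := by positivity
    have hE : ∀ x : ℝ, p₂*d₂*x^2 + 2*d₁*p₂*s*x + Q*d₂ + 2*d₁*d₂*s = 0 →
        r₁ x = ((-1/2 - (p₂/(2*d₂))*x)/t₂) * t₁ ∧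
        r₂ x = ((-1/2 - (p₂/(2*d₂))*x)/t₂) * t₂ := by
      intro x hx
      constructor
      · rw [hr₁ x, hts]
        field_simp
        linear_combination 2 * hx
      · rw [hr₂ x, div_mul_cancel₀ _ ht₂']
    obtain ⟨hA1, hA2⟩ := hE l ((mul_eq_zero.mp hroot).resolve_left h4d₂)
    obtain ⟨hB1, hB2⟩ := hE l' ((mul_eq_zero.mp hroot').resolve_left h4d₂)
    have hcneg : ∀ x : ℝ, 0 < x → -1/2 - (p₂/(2*d₂))*x < 0 := by
      intro x hx
      have : 0 < (p₂/(2*d₂))*x := by positivity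
      linarith only [this]
    refine ⟨(-1/2 - (p₂/(2*d₂))*l)/t₂, l, (-1/2 - (p₂/(2*d₂))*l')/t₂, l',
      div_pos_of_neg_of_neg (hcneg l hl) ht₂,
      div_pos_of_neg_of_neg (hcneg l' hl') ht₂, hl, hl', ?_, hA1, hA2, hB1, hB2⟩
    intro h
    rw [div_eq_div_iff ht₂' ht₂'] at h
    have hll : l ≠ l' := by
      intro he
      have h2 := hl2
      rw [he, hl2'] at h2
      have hz : d₂*δ = 0 := by linarith only [h2]
      rcases mul_eq_zero.mp hz with h' | h'
      · exact hd₂' h'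
      · exact absurd h' (ne_of_gt hδpos)
    apply hll
    have hx : (p₂/(2*d₂))*l = (p₂/(2*d₂))*l' := by
      have ht2 := mul_right_cancel₀ ht₂' h
      linarith only [ht2]
    have hk : (p₂/(2*d₂)) ≠ 0 := by positivity
    exact mul_left_cancel₀ hk hx
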